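/- Let N be an abelian group and n ≥ 1 an integer. Suppose that for every integer m ≥ 1 there are endomorphisms F_m, V_m : N → N such that: (i) for all x ∈ N, (2+mn)•F_m(V_m(x)) − F_m(V_m(F_m(V_m(x)))) = (1+mn)•x; and (ii) for every x ∈ N there exists r(x) ∈ ℕ such that F_m(x) = 0 for all m ≥ r(x). Then N is either the trivial group or N is not finitely generated. -/

import Mathlib

/-- **Theorem A (abstract form).** If an abelian group `N` carries, for every `m ≥ 1`,
endomorphisms `F m` and `V m` satisfying the Farrell identity
`(2+mn) • Fₘ(Vₘ x) - Fₘ(Vₘ(Fₘ(Vₘ x))) = (1+mn) • x` and the vanishing property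
(for every `x` there is `r(x)` with `Fₘ x = 0` for all `m ≥ r(x)`), then `N` is either
trivial or not finitely generated. -/
theorem farrell_nil_trivial_or_infinitely_generated
    (N : Type*) [AddCommGroup N] (n : ℕ) (hn : 1 ≤ n)
    (F V : ℕ → N →+ N)
    (h1 : ∀ m : ℕ, 1 ≤ m → ∀ x : N,
      (2 + m * n) • F m (V m x) - F m (V m (F m (V m x))) = (1 + m * n) • x)
    (h2 : ∀ x : N, ∃ r : ℕ, ∀ m : ℕ, r ≤ m → F m x = 0) :
    (∀ x : N, x = 0) ∨ ¬ AddGroup.FG N := by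
  by_cases hFG : AddGroup.FG N
  · left
    obtain ⟨S, hS⟩ := hFG.out
    set r : N → ℕ := fun s => (h2 s).choose with hr
    set R : ℕ := max 1 (S.sup r) with hR
    have hF : ∀ m, R ≤ m → ∀ x : N, F m x = 0 := by
      intro m hm x
      have hx : x ∈ AddSubgroup.closure (S : Set N) := hS ▸ AddSubgroup.mem_top x
      induction hx using AddSubgroup.closure_induction with
      | mem s hs =>
        have hsS : s ∈ S := hs
        exact (h2 s).choose_spec m
          (le_trans (le_trans (Finset.le_sup (f := r) hsS) (le_max_right 1 _)) hm)
      | zero => exact map_zero _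
      | add a b _ _ ha hb => simp [map_add, ha, hb]
      | neg a _ ha => simp [ha]
    have key : ∀ m, R ≤ m → ∀ x : N, (1 + m * n) • x = 0 := by
      intro m hm x
      have h := h1 m (le_trans (le_max_left _ _) hm) x
      rw [hF m hm, hF m hm, smul_zero, sub_zero] at h
      exact h.symm
    intro x
    have hA := key R le_rfl x
    have hB := key (R + 1) (Nat.le_succ R) x
    have hRn : (1 + (R + 1) * n) = (1 + R * n) + n := by ring
    rw [hRn, add_nsmul, hA, zero_add] at hB
    have hA' : x + (R * n) • x = 0 := by rw [add_nsmul, one_nsmul] at hA; exact hA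
    rw [mul_comm, mul_nsmul, hB, smul_zero, add_zero] at hA'
    exact hA'
  · exact Or.inr hFG
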